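/- Let f : {0,1}^n → {0,1} be a Boolean function and let {S_1, ..., S_k} be an NAADT basis for f. Then every set W in the Möbius support of f equals ⋃_{i ∈ T} S_i for some T ⊆ [k]; equivalently, every monomial AND_W in the Möbius expansion of f is a product Π_{i∈T} AND_{S_i}. -/
import Mathlib


/-- `AND_S(x) = ∏_{i ∈ S} x_i` as a real number. -/
def andR {n : ℕ} (S : Finset (Fin n)) (x : Fin n → Bool) : ℝ :=
  ∏ i ∈ S, (if x i then (1 : ℝ) else 0)

/-- `AND_S(x)` as a Boolean. -/
def andB {n : ℕ} (S : Finset (Fin n)) (x : Fin n → Bool) : Bool :=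
  decide (∀ i ∈ S, x i = true)

lemma andR_indic {n : ℕ} (U V : Finset (Fin n)) :
    andR U (fun i => decide (i ∈ V)) = if U ⊆ V then 1 else 0 := by
  unfold andR
  by_cases h : U ⊆ V
  · rw [if_pos h]
    apply Finset.prod_eq_one
    intro i hi
    simp [h hi]
  · rw [if_neg h]
    obtain ⟨i, hiU, hiV⟩ := Finset.not_subset.mp h
    apply Finset.prod_eq_zero hiU
    simp [hiV]

lemma andB_indic {n : ℕ} (S V : Finset (Fin n)) :
    andB S (fun i => decide (i ∈ V)) = decide (S ⊆ V) := by
  unfold andB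
  rw [decide_eq_decide]
  simp [Finset.subset_iff]

lemma alt_sum {n : ℕ} (A : Finset (Fin n)) :
    ∑ X ∈ A.powerset, (-1 : ℝ) ^ ((A \ X).card) = if A = ∅ then 1 else 0 := by
  induction A using Finset.induction with
  | empty => simp
  | @insert a A ha ih =>
    rw [Finset.sum_powerset_insert ha]
    have h1 : ∀ X ∈ A.powerset, (-1 : ℝ) ^ ((insert a A \ X).card)
        = -(-1 : ℝ) ^ ((A \ X).card) := by
      intro X hX
      have hX' : X ⊆ A := Finset.mem_powerset.mp hX
      have haX : a ∉ X := fun h => ha (hX' h)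
      rw [Finset.insert_sdiff_of_notMem _ haX,
        Finset.card_insert_of_notMem (fun h => ha (Finset.mem_sdiff.mp h).1), pow_succ]
      ring
    have h2 : ∀ X ∈ A.powerset, (-1 : ℝ) ^ ((insert a A \ insert a X).card)
        = (-1 : ℝ) ^ ((A \ X).card) := by
      intro X hX
      have hX' : X ⊆ A := Finset.mem_powerset.mp hX
      have : insert a A \ insert a X = A \ X := by
        ext b
        simp only [Finset.mem_sdiff, Finset.mem_insert]
        constructor
        · rintro ⟨hb1 | hb1, hb2⟩
          · exact absurd (Or.inl hb1) hb2
          · exact ⟨hb1, fun h => hb2 (Or.inr h)⟩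
        · rintro ⟨hb1, hb2⟩
          exact ⟨Or.inr hb1, fun h => by
            rcases h with h | h
            · exact ha (h ▸ hb1)
            · exact hb2 h⟩
      rw [this]
    rw [Finset.sum_congr rfl h1, Finset.sum_congr rfl h2, Finset.sum_neg_distrib]
    simp [Finset.insert_ne_empty]

lemma key_sum {n : ℕ} (U W : Finset (Fin n)) :
    ∑ V ∈ W.powerset, (-1 : ℝ) ^ ((W \ V).card) * (if U ⊆ V then 1 else 0)
      = if U = W then 1 else 0 := by
  have hfil : ∑ V ∈ W.powerset, (-1 : ℝ) ^ ((W \ V).card) * (if U ⊆ V then 1 else 0)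
      = ∑ V ∈ W.powerset.filter (fun V => U ⊆ V), (-1 : ℝ) ^ ((W \ V).card) := by
    rw [Finset.sum_filter]
    exact Finset.sum_congr rfl fun V _ => by rw [mul_ite, mul_one, mul_zero]
  rw [hfil]
  by_cases hUW : U ⊆ W
  · have hbij : ∑ V ∈ W.powerset.filter (fun V => U ⊆ V), (-1 : ℝ) ^ ((W \ V).card)
        = ∑ X ∈ (W \ U).powerset, (-1 : ℝ) ^ (((W \ U) \ X).card) := by
      apply Finset.sum_nbij' (fun V => V \ U) (fun X => U ∪ X)
      · intro V hV
        rw [Finset.mem_filter, Finset.mem_powerset] at hV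
        exact Finset.mem_powerset.mpr (Finset.sdiff_subset_sdiff hV.1 Finset.Subset.rfl)
      · intro X hX
        rw [Finset.mem_powerset] at hX
        rw [Finset.mem_filter, Finset.mem_powerset]
        exact ⟨Finset.union_subset hUW (hX.trans Finset.sdiff_subset), Finset.subset_union_left⟩
      · intro V hV
        rw [Finset.mem_filter] at hV
        exact Finset.union_sdiff_of_subset hV.2
      · intro X hX
        rw [Finset.mem_powerset] at hX
        apply Finset.union_sdiff_cancel_left
        exact Finset.disjoint_left.mpr fun a haU haX => (Finset.mem_sdiff.mp (hX haX)).2 haU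
      · intro V hV
        rw [Finset.mem_filter, Finset.mem_powerset] at hV
        congr 2
        ext b
        simp only [Finset.mem_sdiff]
        constructor
        · rintro ⟨hb1, hb2⟩
          exact ⟨⟨hb1, fun h => hb2 (hV.2 h)⟩, fun h => hb2 h.1⟩
        · rintro ⟨⟨hb1, hb2⟩, hb3⟩
          exact ⟨hb1, fun h => hb3 ⟨h, hb2⟩⟩
    rw [hbij, alt_sum]
    have : W \ U = ∅ ↔ U = W := by
      rw [Finset.sdiff_eq_empty_iff_subset]
      exact ⟨fun h => Finset.Subset.antisymm hUW h, fun h => h ▸ Finset.Subset.rfl⟩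
    simp only [this]
  · have : W.powerset.filter (fun V => U ⊆ V) = ∅ := by
      rw [Finset.filter_eq_empty_iff]
      intro V hV h
      exact hUW (h.trans (Finset.mem_powerset.mp hV))
    rw [this, Finset.sum_empty, if_neg]
    intro h
    rw [h] at hUW
    exact hUW Finset.Subset.rfl

/-- If `𝒮` is an NAADT basis for a Boolean function `f`, then every set in the Möbius
support of `f` is a union of sets from `𝒮`. -/
theorem stmt8 (n : ℕ) (f : (Fin n → Bool) → Bool) (c : Finset (Fin n) → ℝ)
    (hf : ∀ x, (if f x then (1 : ℝ) else 0) = ∑ S : Finset (Fin n), c S * andR S x)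
    (𝒮 : Finset (Finset (Fin n)))
    (hbasis : ∀ x y : Fin n → Bool, (∀ S ∈ 𝒮, andB S x = andB S y) → f x = f y) :
    ∀ W : Finset (Fin n), c W ≠ 0 → ∃ T ⊆ 𝒮, W = T.sup id := by
  -- the real-valued function on subsets
  set F : Finset (Fin n) → ℝ := fun V => if f (fun i => decide (i ∈ V)) then 1 else 0 with hF
  -- Möbius inversion
  have hinv : ∀ W : Finset (Fin n),
      c W = ∑ V ∈ W.powerset, (-1 : ℝ) ^ ((W \ V).card) * F V := by
    intro W
    have : ∀ V : Finset (Fin n), F V = ∑ U : Finset (Fin n),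
        c U * (if U ⊆ V then 1 else 0) := by
      intro V
      rw [hF]
      simp only [hf (fun i => decide (i ∈ V))]
      exact Finset.sum_congr rfl fun U _ => by rw [andR_indic]
    calc c W = ∑ U : Finset (Fin n), c U *
          (∑ V ∈ W.powerset, (-1 : ℝ) ^ ((W \ V).card) * (if U ⊆ V then 1 else 0)) := by
          simp only [key_sum]
          simp only [mul_ite, mul_one, mul_zero]
          rw [Finset.sum_ite_eq' Finset.univ W c]
          simp
      _ = ∑ V ∈ W.powerset, (-1 : ℝ) ^ ((W \ V).card) * F V := by
          simp only [this, Finset.mul_sum, Finset.sum_mul]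
          rw [Finset.sum_comm]
          exact Finset.sum_congr rfl fun V _ => Finset.sum_congr rfl fun U _ => by ring
  intro W hW
  by_contra hcon
  push_neg at hcon
  -- the "closure" of W inside the basis
  set cl : Finset (Fin n) := (𝒮.filter (fun S => S ⊆ W)).sup id with hcl
  have hclW : cl ⊆ W := by
    intro a ha
    rw [hcl, Finset.mem_sup] at ha
    obtain ⟨S, hS, haS⟩ := ha
    exact (Finset.mem_filter.mp hS).2 haS
  have hne : cl ≠ W := fun h => hcon _ (Finset.filter_subset _ _) h.symm
  obtain ⟨w, hwW, hwcl⟩ : ∃ w ∈ W, w ∉ cl := by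
    by_contra h
    push_neg at h
    exact hne (Finset.Subset.antisymm hclW h)
  have hno : ∀ S ∈ 𝒮, S ⊆ W → w ∉ S := by
    intro S hS hSW hwS
    apply hwcl
    rw [hcl, Finset.mem_sup]
    exact ⟨S, Finset.mem_filter.mpr ⟨hS, hSW⟩, hwS⟩
  -- F is invariant under adding w
  have hFinv : ∀ X ⊆ W.erase w, F (insert w X) = F X := by
    intro X hX
    have hXW : X ⊆ W := hX.trans (Finset.erase_subset w W)
    have hwX : w ∉ X := fun h => Finset.notMem_erase w W (hX h)
    have hfe : f (fun i => decide (i ∈ insert w X)) = f (fun i => decide (i ∈ X)) := by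
      apply hbasis
      intro S hS
      rw [andB_indic, andB_indic, decide_eq_decide]
      constructor
      · intro h i hiS
        have hSW : S ⊆ W := h.trans (Finset.insert_subset hwW hXW)
        rcases Finset.mem_insert.mp (h hiS) with h' | h'
        · exact absurd (h' ▸ hiS) (hno S hS hSW)
        · exact h'
      · intro h i hiS
        exact Finset.mem_insert_of_mem (h hiS)
    simp only [hF, hfe]
  -- conclude c W = 0
  apply hW
  rw [hinv W]
  have hWi : W = insert w (W.erase w) := (Finset.insert_erase hwW).symm
  have hwE : w ∉ W.erase w := Finset.notMem_erase w W
  rw [hWi, Finset.sum_powerset_insert hwE]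
  rw [← Finset.sum_add_distrib]
  apply Finset.sum_eq_zero
  intro X hX
  have hXE : X ⊆ W.erase w := Finset.mem_powerset.mp hX
  have hwX : w ∉ X := fun h => hwE (hXE h)
  have hs1 : insert w (W.erase w) \ X = insert w ((W.erase w) \ X) :=
    Finset.insert_sdiff_of_notMem _ hwX
  have hs2 : insert w (W.erase w) \ insert w X = (W.erase w) \ X := by
    ext b
    simp only [Finset.mem_sdiff, Finset.mem_insert]
    constructor
    · rintro ⟨hb1 | hb1, hb2⟩
      · exact absurd (Or.inl hb1) hb2
      · exact ⟨hb1, fun h => hb2 (Or.inr h)⟩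
    · rintro ⟨hb1, hb2⟩
      exact ⟨Or.inr hb1, fun h => by
        rcases h with h | h
        · exact hwE (h ▸ hb1)
        · exact hb2 h⟩
  rw [hs1, hs2, Finset.card_insert_of_notMem
    (fun h => hwE (Finset.mem_sdiff.mp h).1), hFinv X hXE, pow_succ]
  ring
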